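/- Let c₂, r > 0 with r ≥ c₂, and let w > 0 satisfy w·e^w = r·e/c₂. Then β = 1/w satisfies the first-order optimality condition of the CP's reduced problem: log(β·r/c₂) = (1 − β)/β, i.e. β·log(β·r/c₂) + β = 1. -/

import Mathlib

/-- `β = 1 / w` satisfies the first-order condition of the CP's reduced problem:
`log (β * r / c₂) = (1 - β) / β`, i.e. `β * log (β * r / c₂) + β = 1`. -/
theorem stmt_17 (c₂ r w : ℝ) (hc₂ : 0 < c₂) (hr : 0 < r) (hrc : c₂ ≤ r) (hw : 0 < w)
    (hW : w * Real.exp w = r * Real.exp 1 / c₂) :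
    Real.log ((1 / w) * r / c₂) = (1 - 1 / w) / (1 / w) ∧
    (1 / w) * Real.log ((1 / w) * r / c₂) + 1 / w = 1 := by
  have hlog : Real.log (w * Real.exp w) = Real.log (r * Real.exp 1 / c₂) := by rw [hW]
  rw [Real.log_mul (ne_of_gt hw) (Real.exp_ne_zero w), Real.log_exp,
    Real.log_div (by positivity) (ne_of_gt hc₂),
    Real.log_mul (ne_of_gt hr) (Real.exp_ne_zero 1), Real.log_exp] at hlog
  have key : Real.log ((1 / w) * r / c₂) = w - 1 := by
    rw [show (1 / w) * r / c₂ = r / c₂ / w by ring,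
      Real.log_div (by positivity) (ne_of_gt hw),
      Real.log_div (ne_of_gt hr) (ne_of_gt hc₂)]
    linarith
  constructor
  · rw [key]; field_simp
  · rw [key]; field_simp; ring
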